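/- In the Gaudin realization, the global raising operator X⁺_gl = ∑_{a=1}^{N} X⁺_a annihilates the Bethe vector Ψ_M(μ) = B_M(μ)Ω₊ provided the Bethe equations ∑_{a=1}^{N} ℓ_a/(μᵢ − z_a) − ∑_{j≠i} 2/(μᵢ − μⱼ) = 0 hold for i = 1,…,M. More precisely, without imposing the Bethe equations one has X⁺_gl Ψ_M(μ) = ∑_{i=1}^{M} ρ_M(μᵢ; μ^(i)) Ψ^(1)_{M−1}(μ^(i)), where ρ_M(μᵢ; μ^(i)) is the left side of the i-th Bethe equation and Ψ^(1)_{M−1}(μ^(i)) = B^(1)_{M−1}(μ^(i))Ω₊. -/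

import Mathlib

open Finset

/-- The operators B^(k)_M(μ₁,…,μ_M) = ∏_{n=k}^{M+k−1} (X⁻(μ_{n−k+1}) + nξ),
    as an ordered product (left to right), B^(k)_0 = 1. -/
noncomputable def Bop {A : Type*} [Ring A] [Module ℂ A]
    (Xm : ℂ → A) (ξ : ℂ) : ℕ → List ℂ → A
  | _, [] => 1
  | k, μ :: t => (Xm μ + ((k : ℂ) * ξ) • (1 : A)) * Bop Xm ξ (k + 1) t

/-- the argument tuple μ with the i-th entry removed (in increasing index order) -/
noncomputable def rmv {M : ℕ} (μ : Fin M → ℂ) (i : Fin M) : List ℂ :=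
  ((Finset.univ.erase i).sort (· ≤ ·)).map μ

/-- the twisted Gaudin loop generator X⁻(λ) = ∑_a (X⁻_a/(λ−z_a) − (ξ/2)h_a) -/
noncomputable def XmGaudin {H : Type*} [AddCommGroup H] [Module ℂ H] {N : ℕ}
    (z : Fin N → ℂ) (ξ : ℂ) (XmA hA : Fin N → Module.End ℂ H) (lam : ℂ) :
    Module.End ℂ H :=
  ∑ a, ((lam - z a)⁻¹ • XmA a - (ξ / 2) • hA a)

section Abstract
variable {H : Type*} [AddCommGroup H] [Module ℂ H]
variable {Xm : ℂ → Module.End ℂ H} {ξ : ℂ}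

/-- ρ(μ; l) = Λ(μ) − ∑_{ν∈l} 2/(μ−ν) -/
noncomputable def rho (Λ : ℂ → ℂ) (μ : ℂ) (l : List ℂ) : ℂ :=
  Λ μ - (l.map fun ν => 2 / (μ - ν)).sum

lemma rho_nil (Λ : ℂ → ℂ) (μ : ℂ) : rho Λ μ [] = Λ μ := by simp [rho]

lemma rho_cons (Λ : ℂ → ℂ) (μ ν : ℂ) (l : List ℂ) :
    rho Λ μ (ν :: l) = rho Λ μ l - 2 / (μ - ν) := by
  simp [rho]; ring

lemma Bop_nil (k : ℕ) : Bop Xm ξ k [] = 1 := rfl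

lemma Bop_cons (k : ℕ) (μ : ℂ) (t : List ℂ) :
    Bop Xm ξ k (μ :: t) = (Xm μ + ((k : ℂ) * ξ) • (1 : Module.End ℂ H)) * Bop Xm ξ (k + 1) t := rfl

lemma exchange (hXX : ∀ μ ν, Xm μ * Xm ν - Xm ν * Xm μ = ξ • (Xm ν - Xm μ)) (μ ν c : ℂ) :
    (Xm μ + c • (1 : Module.End ℂ H)) * (Xm ν + (c + ξ) • 1) =
      (Xm ν + c • 1) * (Xm μ + (c + ξ) • 1) := by
  have h : Xm μ * Xm ν = Xm ν * Xm μ + ξ • Xm ν - ξ • Xm μ := by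
    have := hXX μ ν
    rw [sub_eq_iff_eq_add] at this
    rw [this]; rw [smul_sub]; abel
  simp only [mul_add, add_mul, smul_mul_assoc, one_mul, mul_smul_comm, mul_one, h]
  module

lemma exchange' (hXX : ∀ μ ν, Xm μ * Xm ν - Xm ν * Xm μ = ξ • (Xm ν - Xm μ)) (μ ν : ℂ) (k : ℕ) :
    (Xm μ + ((k : ℂ) * ξ) • (1 : Module.End ℂ H)) * (Xm ν + (((k + 1 : ℕ) : ℂ) * ξ) • 1) =
      (Xm ν + ((k : ℂ) * ξ) • 1) * (Xm μ + (((k + 1 : ℕ) : ℂ) * ξ) • 1) := by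
  have hc : (((k + 1 : ℕ)) : ℂ) * ξ = (k : ℂ) * ξ + ξ := by push_cast; ring
  rw [hc]; exact exchange hXX μ ν _

lemma Bop_perm (hXX : ∀ μ ν, Xm μ * Xm ν - Xm ν * Xm μ = ξ • (Xm ν - Xm μ))
    {l l' : List ℂ} (h : l.Perm l') : ∀ k, Bop Xm ξ k l = Bop Xm ξ k l' := by
  induction h with
  | nil => intro k; rfl
  | cons x _ ih => intro k; rw [Bop_cons, Bop_cons, ih]
  | swap x y l =>
      intro k
      rw [Bop_cons, Bop_cons, Bop_cons, Bop_cons, ← mul_assoc, ← mul_assoc]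
      congr 1
      exact exchange' hXX y x k
  | trans _ _ ih1 ih2 => intro k; rw [ih1, ih2]

end Abstract
section Abstract2
variable {H : Type*} [AddCommGroup H] [Module ℂ H]
variable {E : Module.End ℂ H} {Xm Hop : ℂ → Module.End ℂ H} {Λ : ℂ → ℂ} {ξ : ℂ}
  {good : ℂ → Prop} {Ω : H}

theorem key_lemma
    (hR1 : ∀ μ, E * Xm μ = Xm μ * E + Hop μ)
    (hR2 : ∀ μ ν, good μ → good ν → μ ≠ ν →
      Hop μ * Xm ν = Xm ν * Hop μ + (2 / (μ - ν)) • (Xm μ - Xm ν) + ξ • Hop ν)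
    (hXX : ∀ μ ν, Xm μ * Xm ν - Xm ν * Xm μ = ξ • (Xm ν - Xm μ))
    (hΩH : ∀ μ, good μ → Hop μ Ω = Λ μ • Ω) (hΩE : E Ω = 0) :
    ∀ (l : List ℂ) (k : ℕ) (μ : ℂ), good μ → (∀ x ∈ l, good x) → μ ∉ l →
      l.Pairwise (· ≠ ·) →
      Hop μ (Bop Xm ξ k l Ω) =
        rho Λ μ l • Bop Xm ξ k l Ω
        + ∑ i : Fin l.length, (2 / (μ - l.get i)) •
            ((Xm μ + ((k : ℂ) * ξ) • (1 : Module.End ℂ H)) (Bop Xm ξ (k + 1) (l.eraseIdx i) Ω))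
        + ξ • E (Bop Xm ξ k l Ω) := by
  intro l
  induction l with
  | nil =>
      intro k μ hμg _ _ _
      simp [Bop_nil, rho_nil, hΩH μ hμg, hΩE]
  | cons ν r ih =>
      intro k μ hμg hg hμl hpw
      have hνg : good ν := hg ν (by simp)
      have hνr : ν ∉ r := fun hmem => (List.pairwise_cons.mp hpw).1 ν hmem rfl
      have hμr : μ ∉ r := fun hmem => hμl (by simp [hmem])
      have hμν : μ ≠ ν := fun h => hμl (by simp [h])
      have hrg : ∀ x ∈ r, good x := fun x hx => hg x (by simp [hx])
      have hrpw : r.Pairwise (· ≠ ·) := (List.pairwise_cons.mp hpw).2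
      set Yν : Module.End ℂ H := Xm ν + ((k : ℂ) * ξ) • 1 with hYν
      set Yμ : Module.End ℂ H := Xm μ + ((k : ℂ) * ξ) • 1 with hYμ
      set Y'ν : Module.End ℂ H := Xm ν + (((k + 1 : ℕ) : ℂ) * ξ) • 1 with hY'ν
      set Y'μ : Module.End ℂ H := Xm μ + (((k + 1 : ℕ) : ℂ) * ξ) • 1 with hY'μ
      set v : H := Bop Xm ξ (k + 1) r Ω with hv
      -- commutation of Hop μ with Yν
      have hcomm : Hop μ * Yν = Yν * Hop μ + (2 / (μ - ν)) • (Xm μ - Xm ν) + ξ • Hop ν := by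
        rw [hYν, mul_add, add_mul, mul_smul_comm, smul_mul_assoc, one_mul, mul_one,
          hR2 μ ν hμg hνg hμν]
        abel
      -- commutation of E with Yν
      have hEcomm : E * Yν = Yν * E + Hop ν := by
        rw [hYν, mul_add, add_mul, mul_smul_comm, smul_mul_assoc, one_mul, mul_one, hR1 ν]
        abel
      have hLHS : Hop μ (Bop Xm ξ k (ν :: r) Ω) =
          Yν (Hop μ v) + (2 / (μ - ν)) • (Xm μ v) - (2 / (μ - ν)) • (Xm ν v)
            + ξ • (Hop ν v) := by
        rw [Bop_cons, ← Module.End.mul_apply, ← mul_assoc, hcomm]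
        simp only [Module.End.mul_apply, LinearMap.add_apply, LinearMap.smul_apply,
          LinearMap.sub_apply, smul_sub]
        abel
      rw [hLHS]
      -- expand E (Bop (ν::r) Ω)
      have hE : E (Bop Xm ξ k (ν :: r) Ω) = Yν (E v) + Hop ν v := by
        rw [Bop_cons, ← Module.End.mul_apply, ← mul_assoc, hEcomm]
        simp only [Module.End.mul_apply, LinearMap.add_apply]
        rfl
      rw [hE]
      -- expand the target sum
      simp only [List.length_cons]
      rw [Fin.sum_univ_succ]
      simp only [List.get_eq_getElem, List.getElem_cons_zero, List.getElem_cons_succ,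
        Fin.val_zero, Fin.val_succ, List.eraseIdx_cons_zero, List.eraseIdx_cons_succ,
        List.get_cons_zero, List.get_cons_succ]
      -- rewrite Bop (k+1) (ν :: r.eraseIdx i)
      have hsum2 : ∀ i : Fin r.length,
          (2 / (μ - r[(i : ℕ)])) • (Yμ (Bop Xm ξ (k + 1) (ν :: r.eraseIdx i) Ω))
          = (2 / (μ - r[(i : ℕ)])) • (Yν (Y'μ (Bop Xm ξ (k + 1 + 1) (r.eraseIdx i) Ω))) := by
        intro i
        have hop : Yμ * (Y'ν * Bop Xm ξ (k + 1 + 1) (r.eraseIdx i))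
            = Yν * (Y'μ * Bop Xm ξ (k + 1 + 1) (r.eraseIdx i)) := by
          rw [← mul_assoc, ← mul_assoc]
          congr 1
          exact exchange' hXX μ ν k
        rw [Bop_cons, ← Module.End.mul_apply, hop, Module.End.mul_apply, Module.End.mul_apply]
      rw [Finset.sum_congr rfl (fun i _ => hsum2 i)]
      -- use induction hypothesis on Hop μ v
      rw [show Hop μ v = rho Λ μ r • v
          + ∑ i : Fin r.length, (2 / (μ - r.get i)) •
              (Y'μ (Bop Xm ξ (k + 1 + 1) (r.eraseIdx i) Ω))
          + ξ • E v from ih (k+1) μ hμg hrg hμr hrpw]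
      rw [rho_cons, Bop_cons, Module.End.mul_apply]
      -- now pure linear algebra
      simp only [map_add, map_smul, map_sum, hYμ, hYν, LinearMap.add_apply,
        LinearMap.smul_apply, Module.End.one_apply, smul_sub, smul_add, smul_smul,
        sub_smul, Finset.smul_sum]
      module
theorem main_lemma
    (hR1 : ∀ μ, E * Xm μ = Xm μ * E + Hop μ)
    (hR2 : ∀ μ ν, good μ → good ν → μ ≠ ν →
      Hop μ * Xm ν = Xm ν * Hop μ + (2 / (μ - ν)) • (Xm μ - Xm ν) + ξ • Hop ν)
    (hXX : ∀ μ ν, Xm μ * Xm ν - Xm ν * Xm μ = ξ • (Xm ν - Xm μ))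
    (hΩH : ∀ μ, good μ → Hop μ Ω = Λ μ • Ω) (hΩE : E Ω = 0) :
    ∀ (l : List ℂ) (k : ℕ), (∀ x ∈ l, good x) → l.Pairwise (· ≠ ·) →
      E (Bop Xm ξ k l Ω) =
        ∑ i : Fin l.length, rho Λ (l.get i) (l.eraseIdx i) •
          (Bop Xm ξ (k + 1) (l.eraseIdx i) Ω) := by
  intro l
  induction l with
  | nil => intro k _ _; simp [Bop_nil, hΩE]
  | cons μ s ih =>
      intro k hg hpw
      have hμg : good μ := hg μ (by simp)
      have hμs : μ ∉ s := fun hmem => (List.pairwise_cons.mp hpw).1 μ hmem rfl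
      have hsg : ∀ x ∈ s, good x := fun x hx => hg x (by simp [hx])
      have hspw : s.Pairwise (· ≠ ·) := (List.pairwise_cons.mp hpw).2
      set Yμ : Module.End ℂ H := Xm μ + ((k : ℂ) * ξ) • 1 with hYμ
      set Y'μ : Module.End ℂ H := Xm μ + (((k + 1 : ℕ) : ℂ) * ξ) • 1 with hY'μ
      set v : H := Bop Xm ξ (k + 1) s Ω with hv
      have hEcomm : E * Yμ = Yμ * E + Hop μ := by
        rw [hYμ, mul_add, add_mul, mul_smul_comm, smul_mul_assoc, one_mul, mul_one, hR1 μ]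
        abel
      have hLHS : E (Bop Xm ξ k (μ :: s) Ω) = Yμ (E v) + Hop μ v := by
        rw [Bop_cons, ← Module.End.mul_apply, ← mul_assoc, hEcomm]
        simp only [Module.End.mul_apply, LinearMap.add_apply]
        rfl
      rw [hLHS, ih (k+1) hsg hspw,
        key_lemma hR1 hR2 hXX hΩH hΩE s (k+1) μ hμg hsg hμs hspw,
        ih (k+1) hsg hspw]
      -- expand target sum
      simp only [List.length_cons, Fin.sum_univ_succ, List.get_eq_getElem,
        List.getElem_cons_zero, List.getElem_cons_succ, Fin.val_zero, Fin.val_succ,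
        List.eraseIdx_cons_zero, List.eraseIdx_cons_succ]
      -- rewrite Bop (k+1) (μ :: s.eraseIdx i) in the target
      have hBcons : ∀ i : Fin s.length,
          rho Λ (s[(i : ℕ)]) (μ :: s.eraseIdx i) • (Bop Xm ξ (k + 1) (μ :: s.eraseIdx i) Ω)
          = (rho Λ (s[(i : ℕ)]) (s.eraseIdx i) + 2 / (μ - s[(i : ℕ)])) •
              (Y'μ (Bop Xm ξ (k + 1 + 1) (s.eraseIdx i) Ω)) := by
        intro i
        rw [Bop_cons, Module.End.mul_apply, rho_cons]
        congr 1
        rw [sub_eq_add_neg, ← neg_sub μ (s[(i:ℕ)] : ℂ), div_neg, neg_neg]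
      rw [Finset.sum_congr rfl (fun i _ => hBcons i)]
      have hterm : ∀ i : Fin s.length,
          rho Λ (s[(i : ℕ)]) (s.eraseIdx (i : ℕ)) •
              (Yμ (Bop Xm ξ (k + 1 + 1) (s.eraseIdx (i : ℕ)) Ω))
            + (2 / (μ - s[(i : ℕ)])) • (Y'μ (Bop Xm ξ (k + 1 + 1) (s.eraseIdx (i : ℕ)) Ω))
            + ξ • (rho Λ (s[(i : ℕ)]) (s.eraseIdx (i : ℕ)) •
                (Bop Xm ξ (k + 1 + 1) (s.eraseIdx (i : ℕ)) Ω))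
          = (rho Λ (s[(i : ℕ)]) (s.eraseIdx (i : ℕ)) + 2 / (μ - s[(i : ℕ)])) •
              (Y'μ (Bop Xm ξ (k + 1 + 1) (s.eraseIdx (i : ℕ)) Ω)) := by
        intro i
        rw [hYμ, hY'μ]
        simp only [LinearMap.add_apply, LinearMap.smul_apply, Module.End.one_apply,
          Nat.cast_add, Nat.cast_one]
        module
      rw [Finset.sum_congr rfl (fun i _ => (hterm i).symm)]
      simp only [List.get_eq_getElem, map_sum, map_smul, Finset.smul_sum,
        Finset.sum_add_distrib]
      abel


end Abstract2
section Concrete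
variable {H : Type*} [AddCommGroup H] [Module ℂ H]

lemma comm_expand (c1 d1 c2 d2 : ℂ) (X1 Y1 X2 Y2 : Module.End ℂ H) :
    (c1 • X1 + d1 • Y1) * (c2 • X2 + d2 • Y2) - (c2 • X2 + d2 • Y2) * (c1 • X1 + d1 • Y1)
    = (c1 * c2) • (X1 * X2 - X2 * X1) + (c1 * d2) • (X1 * Y2 - Y2 * X1)
      + (d1 * c2) • (Y1 * X2 - X2 * Y1) + (d1 * d2) • (Y1 * Y2 - Y2 * Y1) := by
  simp only [add_mul, mul_add, smul_mul_assoc, mul_smul_comm, smul_smul, smul_sub]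
  module

lemma single_comm (c2 d2 : ℂ) (X X2 Y2 : Module.End ℂ H) :
    X * (c2 • X2 + d2 • Y2) - (c2 • X2 + d2 • Y2) * X
    = c2 • (X * X2 - X2 * X) + d2 • (X * Y2 - Y2 * X) := by
  simp only [mul_add, add_mul, smul_mul_assoc, mul_smul_comm, smul_sub]
  module

lemma sum_comm_lemma {n : ℕ} (f g : Fin n → Module.End ℂ H) :
    (∑ a, f a) * (∑ b, g b) - (∑ b, g b) * (∑ a, f a)
    = ∑ a, ∑ b, (f a * g b - g b * f a) := by
  rw [Finset.sum_mul_sum, Finset.sum_mul_sum]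
  rw [show (∑ b, ∑ a, g b * f a) = ∑ a, ∑ b, g b * f a from Finset.sum_comm]
  rw [← Finset.sum_sub_distrib]
  exact Finset.sum_congr rfl fun a _ => by rw [← Finset.sum_sub_distrib]

variable {N : ℕ} (z ℓ : Fin N → ℂ) (ξ : ℂ) (hA XpA XmA : Fin N → Module.End ℂ H)

/-- h(λ) = ∑_a (h_a/(λ−z_a) + ξ X⁺_a) -/
noncomputable def HopGaudin (lam : ℂ) : Module.End ℂ H :=
  ∑ a, ((lam - z a)⁻¹ • hA a + ξ • XpA a)

lemma XmGaudin_eq (lam : ℂ) :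
    XmGaudin z ξ XmA hA lam = ∑ a, ((lam - z a)⁻¹ • XmA a + (-(ξ/2)) • hA a) := by
  unfold XmGaudin
  exact Finset.sum_congr rfl fun a _ => by rw [neg_smul, ← sub_eq_add_neg]

end Concrete
section Relations
variable {H : Type*} [AddCommGroup H] [Module ℂ H] {N : ℕ}
variable (z ℓ : Fin N → ℂ) (ξ : ℂ) (hA XpA XmA : Fin N → Module.End ℂ H)

-- derived commutators
lemma hXph (hhXp : ∀ a b, hA a * XpA b - XpA b * hA a = if a = b then (2 : ℂ) • XpA a else 0) :
    ∀ a b, XpA a * hA b - hA b * XpA a = if a = b then ((-2 : ℂ) • XpA a) else 0 := by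
  intro a b
  rcases eq_or_ne a b with rfl | hne
  · have h := hhXp a a
    rw [if_pos rfl] at h
    rw [if_pos rfl, ← neg_sub, h]
    module
  · have h := hhXp b a
    rw [if_neg (Ne.symm hne)] at h
    rw [if_neg hne, ← neg_sub, h, neg_zero]

lemma hXmh (hhXm : ∀ a b, hA a * XmA b - XmA b * hA a = if a = b then (-2 : ℂ) • XmA a else 0) :
    ∀ a b, XmA a * hA b - hA b * XmA a = if a = b then ((2 : ℂ) • XmA a) else 0 := by
  intro a b
  rcases eq_or_ne a b with rfl | hne
  · have h := hhXm a a
    rw [if_pos rfl] at h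
    rw [if_pos rfl, ← neg_sub, h]
    module
  · have h := hhXm b a
    rw [if_neg (Ne.symm hne)] at h
    rw [if_neg hne, ← neg_sub, h, neg_zero]

/-- R1 : [E, X⁻(μ)] = h(μ) -/
lemma R1_gaudin
    (hhXp : ∀ a b, hA a * XpA b - XpA b * hA a = if a = b then (2 : ℂ) • XpA a else 0)
    (hXpXm : ∀ a b, XpA a * XmA b - XmA b * XpA a = if a = b then hA a else 0)
    (μ : ℂ) :
    (∑ a, XpA a) * XmGaudin z ξ XmA hA μ
      = XmGaudin z ξ XmA hA μ * (∑ a, XpA a) + HopGaudin z ξ hA XpA μ := by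
  rw [← sub_eq_iff_eq_add']
  rw [XmGaudin_eq, sum_comm_lemma]
  unfold HopGaudin
  refine Finset.sum_congr rfl fun a _ => ?_
  have hb : ∀ b : Fin N, XpA a * ((μ - z b)⁻¹ • XmA b + (-(ξ/2)) • hA b)
      - ((μ - z b)⁻¹ • XmA b + (-(ξ/2)) • hA b) * XpA a
      = if a = b then ((μ - z a)⁻¹ • hA a + ξ • XpA a) else 0 := by
    intro b
    rw [single_comm, hXpXm a b, hXph hA XpA hhXp a b]
    rcases eq_or_ne a b with rfl | hne
    · rw [if_pos rfl, if_pos rfl, if_pos rfl]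
      module
    · rw [if_neg hne, if_neg hne, if_neg hne, smul_zero, smul_zero, add_zero]
  rw [Finset.sum_congr rfl fun b _ => hb b]
  simp

/-- commutator of two X⁻'s -/
lemma hXX_gaudin
    (hhXm : ∀ a b, hA a * XmA b - XmA b * hA a = if a = b then (-2 : ℂ) • XmA a else 0)
    (hhh : ∀ a b, hA a * hA b = hA b * hA a)
    (hXmXm : ∀ a b, XmA a * XmA b = XmA b * XmA a)
    (μ ν : ℂ) :
    XmGaudin z ξ XmA hA μ * XmGaudin z ξ XmA hA ν
      - XmGaudin z ξ XmA hA ν * XmGaudin z ξ XmA hA μ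
      = ξ • (XmGaudin z ξ XmA hA ν - XmGaudin z ξ XmA hA μ) := by
  rw [XmGaudin_eq, XmGaudin_eq z ξ hA XmA ν, sum_comm_lemma]
  have key : ∀ a b : Fin N,
      ((μ - z a)⁻¹ • XmA a + (-(ξ/2)) • hA a) * ((ν - z b)⁻¹ • XmA b + (-(ξ/2)) • hA b)
      - ((ν - z b)⁻¹ • XmA b + (-(ξ/2)) • hA b) * ((μ - z a)⁻¹ • XmA a + (-(ξ/2)) • hA a)
      = if a = b then (ξ * ((ν - z a)⁻¹ - (μ - z a)⁻¹)) • XmA a else 0 := by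
    intro a b
    rw [comm_expand, hXmh hA XmA hhXm a b, hhXm a b,
      show XmA a * XmA b - XmA b * XmA a = 0 from sub_eq_zero.mpr (hXmXm a b),
      show hA a * hA b - hA b * hA a = 0 from sub_eq_zero.mpr (hhh a b)]
    rcases eq_or_ne a b with rfl | hne
    · rw [if_pos rfl, if_pos rfl, if_pos rfl]
      match_scalars <;> ring
    · rw [if_neg hne, if_neg hne, if_neg hne, smul_zero, smul_zero, smul_zero, smul_zero]
      simp
  rw [Finset.sum_congr rfl fun a _ => Finset.sum_congr rfl fun b _ => key a b]
  simp only [Finset.sum_ite_eq, Finset.mem_univ, if_pos]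
  rw [← Finset.sum_sub_distrib, Finset.smul_sum]
  refine Finset.sum_congr rfl fun a _ => ?_
  match_scalars <;> ring

/-- R2 : [h(μ), X⁻(ν)] = (2/(μ−ν))(X⁻(μ)−X⁻(ν)) + ξ h(ν) -/
lemma R2_gaudin
    (hhXm : ∀ a b, hA a * XmA b - XmA b * hA a = if a = b then (-2 : ℂ) • XmA a else 0)
    (hhXp : ∀ a b, hA a * XpA b - XpA b * hA a = if a = b then (2 : ℂ) • XpA a else 0)
    (hXpXm : ∀ a b, XpA a * XmA b - XmA b * XpA a = if a = b then hA a else 0)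
    (hhh : ∀ a b, hA a * hA b = hA b * hA a)
    (μ ν : ℂ) (hgμ : ∀ a, μ ≠ z a) (hgν : ∀ a, ν ≠ z a) (hμν : μ ≠ ν) :
    HopGaudin z ξ hA XpA μ * XmGaudin z ξ XmA hA ν
      = XmGaudin z ξ XmA hA ν * HopGaudin z ξ hA XpA μ
        + (2 / (μ - ν)) • (XmGaudin z ξ XmA hA μ - XmGaudin z ξ XmA hA ν)
        + ξ • HopGaudin z ξ hA XpA ν := by
  rw [add_assoc, ← sub_eq_iff_eq_add']
  rw [XmGaudin_eq]
  unfold HopGaudin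
  rw [sum_comm_lemma]
  have key : ∀ a b : Fin N,
      ((μ - z a)⁻¹ • hA a + ξ • XpA a) * ((ν - z b)⁻¹ • XmA b + (-(ξ/2)) • hA b)
      - ((ν - z b)⁻¹ • XmA b + (-(ξ/2)) • hA b) * ((μ - z a)⁻¹ • hA a + ξ • XpA a)
      = if a = b then ((-2 * ((μ - z a)⁻¹ * (ν - z a)⁻¹)) • XmA a
          + (ξ * (ν - z a)⁻¹) • hA a + (ξ * ξ) • XpA a) else 0 := by
    intro a b
    rw [comm_expand, hhXm a b, hXpXm a b, hXph hA XpA hhXp a b,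
      show hA a * hA b - hA b * hA a = 0 from sub_eq_zero.mpr (hhh a b)]
    rcases eq_or_ne a b with rfl | hne
    · rw [if_pos rfl, if_pos rfl, if_pos rfl, if_pos rfl]
      match_scalars <;> ring
    · rw [if_neg hne, if_neg hne, if_neg hne, if_neg hne]
      simp
  rw [Finset.sum_congr rfl fun a _ => Finset.sum_congr rfl fun b _ => key a b]
  simp only [Finset.sum_ite_eq, Finset.mem_univ, if_pos]
  rw [XmGaudin_eq z ξ hA XmA μ, ← Finset.sum_sub_distrib, Finset.smul_sum,
    Finset.smul_sum, ← Finset.sum_add_distrib]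
  refine Finset.sum_congr rfl fun a _ => ?_
  have h1 : μ - z a ≠ 0 := sub_ne_zero.mpr (hgμ a)
  have h2 : ν - z a ≠ 0 := sub_ne_zero.mpr (hgν a)
  have h3 : μ - ν ≠ 0 := sub_ne_zero.mpr hμν
  match_scalars
  · field_simp
    ring
  · field_simp
    ring
  · ring

/-- action on the vacuum -/
lemma HopOmega (Ω : H) (hΩp : ∀ a, XpA a Ω = 0) (hΩh : ∀ a, hA a Ω = ℓ a • Ω)
    (μ : ℂ) : HopGaudin z ξ hA XpA μ Ω = (∑ a, ℓ a / (μ - z a)) • Ω := by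
  unfold HopGaudin
  rw [LinearMap.sum_apply, Finset.sum_smul]
  refine Finset.sum_congr rfl fun a _ => ?_
  simp only [LinearMap.add_apply, LinearMap.smul_apply, hΩp, hΩh, smul_zero, add_zero,
    smul_smul]
  rw [div_eq_inv_mul]

lemma EOmega (Ω : H) (hΩp : ∀ a, XpA a Ω = 0) : (∑ a, XpA a) Ω = 0 := by
  rw [LinearMap.sum_apply]
  simp [hΩp]

end Relations
section Glue

lemma eraseIdx_map' {α β : Type*} (f : α → β) : ∀ (l : List α) (i : ℕ),
    (l.map f).eraseIdx i = (l.eraseIdx i).map f := by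
  intro l
  induction l with
  | nil => intro i; simp
  | cons a t ih =>
      intro i
      cases i with
      | zero => simp
      | succ j => simp [ih j]

lemma finRange_eraseIdx_perm (n : ℕ) (i : Fin n) :
    ((List.finRange n).eraseIdx i).Perm
      ((Finset.univ.erase i).sort (· ≤ ·)) := by
  have hget : (List.finRange n).get ⟨(i : ℕ), by simp⟩ = i := by
    simp [List.get_finRange]
  have hperm : ((List.finRange n).erase i).Perm ((List.finRange n).eraseIdx i) := by
    have := List.erase_getElem (l := List.finRange n) (i := (i : ℕ)) (by simp)
    rwa [show (List.finRange n)[(i : ℕ)]'(by simp) = i by simp] at this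
  refine List.perm_of_nodup_nodup_toFinset_eq ?_ ?_ ?_
  · exact (List.eraseIdx_sublist (List.finRange n) i).nodup (List.nodup_finRange n)
  · exact Finset.sort_nodup _ _
  · rw [← List.toFinset_eq_of_perm _ _ hperm, Finset.sort_toFinset]
    ext x
    simp [List.Nodup.mem_erase_iff (List.nodup_finRange n), Finset.mem_erase]

lemma ofFn_eraseIdx_perm {M : ℕ} (μ : Fin M → ℂ) (i : Fin M) :
    ((List.ofFn μ).eraseIdx i).Perm (rmv μ i) := by
  rw [List.ofFn_eq_map, eraseIdx_map']
  exact (finRange_eraseIdx_perm M i).map μ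

lemma sum_sort_map {α : Type*} [DecidableEq α] (s : Finset α) (r : α → α → Prop)
    [DecidableRel r] [IsTrans α r] [IsAntisymm α r] [IsTotal α r] (f : α → ℂ) :
    ((s.sort r).map f).sum = ∑ x ∈ s, f x := by
  have h1 : (s.sort r).Perm s.toList := Finset.sort_perm_toList ..
  rw [List.Perm.sum_eq (h1.map f)]
  exact Finset.sum_map_toList s f

end Glue
/-- off shell,
    X⁺_gl Ψ_M(μ) = ∑_i ρ_M(μᵢ; μ^(i)) Ψ^(1)_{M−1}(μ^(i)),
    and hence X⁺_gl annihilates the Bethe vector when the Bethe equations hold. -/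
theorem Xp_global_on_Bethe_vector
    {H : Type*} [AddCommGroup H] [Module ℂ H]
    (N : ℕ) (z ℓ : Fin N → ℂ) (hz : Function.Injective z) (ξ : ℂ)
    (hA XpA XmA : Fin N → Module.End ℂ H)
    (hhh : ∀ a b, hA a * hA b = hA b * hA a)
    (hhXp : ∀ a b, hA a * XpA b - XpA b * hA a = if a = b then (2 : ℂ) • XpA a else 0)
    (hhXm : ∀ a b, hA a * XmA b - XmA b * hA a = if a = b then (-2 : ℂ) • XmA a else 0)
    (hXpXm : ∀ a b, XpA a * XmA b - XmA b * XpA a = if a = b then hA a else 0)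
    (hXpXp : ∀ a b, XpA a * XpA b = XpA b * XpA a)
    (hXmXm : ∀ a b, XmA a * XmA b = XmA b * XmA a)
    (Ω : H) (hΩp : ∀ a, XpA a Ω = 0) (hΩh : ∀ a, hA a Ω = ℓ a • Ω)
    (M : ℕ) (μ : Fin (M + 1) → ℂ) (hμ : Function.Injective μ)
    (hdisj : ∀ i a, μ i ≠ z a) :
    ((∑ a, XpA a) (Bop (XmGaudin z ξ XmA hA) ξ 0 (List.ofFn μ) Ω) =
      ∑ i, ((∑ a, ℓ a / (μ i - z a)) - ∑ j ∈ Finset.univ.erase i, 2 / (μ i - μ j)) •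
        (Bop (XmGaudin z ξ XmA hA) ξ 1 (rmv μ i) Ω)) ∧
    ((∀ i, (∑ a, ℓ a / (μ i - z a)) - ∑ j ∈ Finset.univ.erase i, 2 / (μ i - μ j) = 0) →
      (∑ a, XpA a) (Bop (XmGaudin z ξ XmA hA) ξ 0 (List.ofFn μ) Ω) = 0) := by
  have hXXf : ∀ m n, XmGaudin z ξ XmA hA m * XmGaudin z ξ XmA hA n
      - XmGaudin z ξ XmA hA n * XmGaudin z ξ XmA hA m
      = ξ • (XmGaudin z ξ XmA hA n - XmGaudin z ξ XmA hA m) :=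
    fun m n => hXX_gaudin z ξ hA XmA hhXm hhh hXmXm m n
  have hR1f : ∀ m, (∑ a, XpA a) * XmGaudin z ξ XmA hA m
      = XmGaudin z ξ XmA hA m * (∑ a, XpA a) + HopGaudin z ξ hA XpA m :=
    fun m => R1_gaudin z ξ hA XpA XmA hhXp hXpXm m
  have hR2f : ∀ m n, (∀ a, m ≠ z a) → (∀ a, n ≠ z a) → m ≠ n →
      HopGaudin z ξ hA XpA m * XmGaudin z ξ XmA hA n
      = XmGaudin z ξ XmA hA n * HopGaudin z ξ hA XpA m
        + (2 / (m - n)) • (XmGaudin z ξ XmA hA m - XmGaudin z ξ XmA hA n)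
        + ξ • HopGaudin z ξ hA XpA n :=
    fun m n hm hn hmn => R2_gaudin z ξ hA XpA XmA hhXm hhXp hXpXm hhh m n hm hn hmn
  have hΩHf : ∀ m, (∀ a, m ≠ z a) →
      HopGaudin z ξ hA XpA m Ω = (∑ a, ℓ a / (m - z a)) • Ω :=
    fun m _ => HopOmega z ℓ ξ hA XpA Ω hΩp hΩh m
  have hΩEf : (∑ a, XpA a) Ω = 0 := EOmega XpA Ω hΩp
  have hgood : ∀ x ∈ List.ofFn μ, ∀ a, x ≠ z a := by
    intro x hx
    rw [List.mem_ofFn] at hx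
    obtain ⟨i, rfl⟩ := hx
    exact hdisj i
  have hpw : (List.ofFn μ).Pairwise (· ≠ ·) := by
    rw [List.pairwise_ofFn]
    exact fun i j hij => hμ.ne (Fin.ne_of_lt hij)
  have hmain := main_lemma (E := ∑ a, XpA a) (Xm := XmGaudin z ξ XmA hA)
    (Hop := HopGaudin z ξ hA XpA) (Λ := fun lam => ∑ a, ℓ a / (lam - z a)) (ξ := ξ)
    (good := fun lam => ∀ a, lam ≠ z a) (Ω := Ω)
    hR1f hR2f hXXf hΩHf hΩEf (List.ofFn μ) 0 hgood hpw
  have part1 : (∑ a, XpA a) (Bop (XmGaudin z ξ XmA hA) ξ 0 (List.ofFn μ) Ω) =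
      ∑ i, ((∑ a, ℓ a / (μ i - z a)) - ∑ j ∈ Finset.univ.erase i, 2 / (μ i - μ j)) •
        (Bop (XmGaudin z ξ XmA hA) ξ 1 (rmv μ i) Ω) := by
    rw [hmain]
    refine Fintype.sum_bijective (finCongr (List.length_ofFn (f := μ)))
      (finCongr (List.length_ofFn (f := μ))).bijective _ _ fun i => ?_
    set j : Fin (M + 1) := finCongr (List.length_ofFn (f := μ)) i with hj
    have hij : (i : ℕ) = (j : ℕ) := rfl
    have hperm : ((List.ofFn μ).eraseIdx (i : ℕ)).Perm (rmv μ j) := by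
      rw [hij]; exact ofFn_eraseIdx_perm μ j
    have hBeq : Bop (XmGaudin z ξ XmA hA) ξ (0 + 1) ((List.ofFn μ).eraseIdx (i : ℕ))
        = Bop (XmGaudin z ξ XmA hA) ξ 1 (rmv μ j) :=
      Bop_perm hXXf hperm (0 + 1)
    have hget : (List.ofFn μ).get i = μ j := by
      rw [List.get_ofFn]; rfl
    have hrho : rho (fun lam => ∑ a, ℓ a / (lam - z a)) ((List.ofFn μ).get i)
        ((List.ofFn μ).eraseIdx (i : ℕ))
        = (∑ a, ℓ a / (μ j - z a)) - ∑ j' ∈ Finset.univ.erase j, 2 / (μ j - μ j') := by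
      rw [rho, hget]
      congr 1
      rw [List.Perm.sum_eq (hperm.map _)]
      rw [rmv, List.map_map, sum_sort_map]
      simp [Function.comp]
    rw [hrho, hBeq]
  exact ⟨part1, fun h => by
    rw [part1]
    exact Finset.sum_eq_zero fun i _ => by rw [h i, zero_smul]⟩
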